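/- Fix an integer N ≥ 1 and strictly increasing real N-tuples 𝐦 = (m₀ < ⋯ < m_{N−1}) and 𝐧 = (n₀ < ⋯ < n_{N−1}) with 𝐦 ≠ 𝐧 and m_j ≤ n_j for all j. Let u ∈ (0, ∞)^N have pairwise distinct entries, let k ∈ {1, …, N}, and let t > u_k be such that the vector v obtained from u by replacing the k-th coordinate by t still has pairwise distinct entries. Then det(u^{∘𝐦}) ≠ 0, det(v^{∘𝐦}) ≠ 0, and det(u^{∘𝐧})/det(u^{∘𝐦}) < det(v^{∘𝐧})/det(v^{∘𝐦}). -/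

import Mathlib

set_option maxHeartbeats 1000000

open Matrix

private lemma linIndep_rpow : ∀ (r : ℕ) (μ c x : Fin r → ℝ),
    Function.Injective μ → StrictMono x → (∀ i, 0 < x i) →
    (∀ i, ∑ j, c j * x i ^ μ j = 0) → c = 0 := by
  intro r
  induction r with
  | zero => intro μ c x _ _ _ _; funext i; exact i.elim0
  | succ r ih =>
    intro μ c x hμ hx hxpos hz
    set F : ℝ → ℝ := fun s => ∑ j, c j * s ^ (μ j - μ 0) with hF
    set G : ℝ → ℝ := fun s => ∑ j, c j * ((μ j - μ 0) * s ^ (μ j - μ 0 - 1)) with hG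
    have hFz : ∀ i, F (x i) = 0 := by
      intro i
      have hxi := hxpos i
      have h0 : (0:ℝ) < x i ^ (μ 0) := Real.rpow_pos_of_pos hxi _
      have hsum : (x i ^ μ 0) * F (x i) = 0 := by
        rw [hF, Finset.mul_sum]
        rw [← hz i]
        refine Finset.sum_congr rfl fun j _ => ?_
        rw [Real.rpow_sub hxi]
        field_simp
      rcases mul_eq_zero.1 hsum with h | h
      · exact absurd h h0.ne'
      · exact h
    have hder : ∀ s : ℝ, 0 < s → HasDerivAt F (G s) s := by
      intro s hs
      rw [hF, hG]
      apply HasDerivAt.fun_sum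
      intro j _
      exact (Real.hasDerivAt_rpow_const (Or.inl hs.ne')).const_mul (c j)
    have hGz : ∀ i : Fin r, ∃ y ∈ Set.Ioo (x i.castSucc) (x i.succ), G y = 0 := by
      intro i
      have hab : x i.castSucc < x i.succ := hx Fin.castSucc_lt_succ
      have hpos : ∀ s ∈ Set.Icc (x i.castSucc) (x i.succ), 0 < s :=
        fun s hs => lt_of_lt_of_le (hxpos _) hs.1
      refine exists_hasDerivAt_eq_zero hab ?_ ((hFz _).trans (hFz _).symm) ?_
      · exact fun s hs => ((hder s (hpos s hs)).continuousAt).continuousWithinAt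
      · exact fun s hs => hder s (hpos s (Set.mem_Icc_of_Ioo hs))
    choose y hy hGy using hGz
    have hysm : StrictMono y := by
      intro a b hab
      calc y a < x a.succ := (hy a).2
        _ ≤ x b.castSucc := hx.monotone (by
            simp only [Fin.le_def, Fin.val_succ, Fin.coe_castSucc]
            exact hab)
        _ < y b := (hy b).1
    have hypos : ∀ i, 0 < y i := fun i => lt_trans (hxpos _) (hy i).1
    have hsum0 : ∀ i : Fin r, ∑ j : Fin r, (c j.succ * (μ j.succ - μ 0)) * y i ^ (μ j.succ - μ 0 - 1) = 0 := by
      intro i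
      have := hGy i
      simp only [hG, Fin.sum_univ_succ, sub_self, zero_mul, mul_zero, zero_add] at this
      rw [← this]
      exact Finset.sum_congr rfl fun j _ => by ring
    have hμ' : Function.Injective (fun j : Fin r => μ j.succ - μ 0 - 1) := by
      intro a b h
      have : μ a.succ = μ b.succ := by dsimp at h; linarith
      exact Fin.succ_injective _ (hμ this)
    have hc' := ih _ _ y hμ' hysm hypos hsum0
    have hcs : ∀ j : Fin r, c j.succ = 0 := by
      intro j
      have h1 := congrFun hc' j
      simp only [Pi.zero_apply] at h1
      rcases mul_eq_zero.1 h1 with h | h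
      · exact h
      · exact absurd (by linarith [sub_eq_zero.1 h] : μ j.succ = μ 0)
          (fun hh => (Fin.succ_ne_zero j) (hμ hh))
    have hc0 : c 0 = 0 := by
      have := hz 0
      rw [Fin.sum_univ_succ] at this
      simp only [hcs, zero_mul, Finset.sum_const_zero, add_zero] at this
      have h0 : (0:ℝ) < x 0 ^ (μ 0) := Real.rpow_pos_of_pos (hxpos 0) _
      rcases mul_eq_zero.1 this with h | h
      · exact h
      · exact absurd h h0.ne'
    funext j
    rcases Fin.eq_zero_or_eq_succ j with h | ⟨j', rfl⟩
    · rw [h]; exact hc0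
    · exact hcs j'

private noncomputable def GVd {r : ℕ} (w μ : Fin r → ℝ) : ℝ := Matrix.det (Matrix.of fun i j => w i ^ μ j)

private lemma exists_sort_perm {r : ℕ} {w : Fin r → ℝ} (hw : Function.Injective w) :
    ∃ σ : Equiv.Perm (Fin r), StrictMono (w ∘ σ) :=
  ⟨Tuple.sort w, (Tuple.monotone_sort w).strictMono_of_injective
    (hw.comp (Tuple.sort w).injective)⟩

private lemma GVd_ne_zero {r : ℕ} {w μ : Fin r → ℝ} (hw : Function.Injective w)
    (hpos : ∀ i, 0 < w i) (hμ : Function.Injective μ) : GVd w μ ≠ 0 := by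
  intro h
  obtain ⟨v, hv0, hv⟩ := (Matrix.exists_mulVec_eq_zero_iff).2 h
  obtain ⟨σ, hσ⟩ := exists_sort_perm hw
  apply hv0
  refine linIndep_rpow r μ v (w ∘ σ) hμ hσ (fun i => hpos _) fun i => ?_
  have := congrFun hv (σ i)
  rw [Matrix.mulVec, dotProduct] at this
  simpa only [Matrix.of_apply, Pi.zero_apply, mul_comm, Function.comp_apply] using this

private lemma GVd_pos {r : ℕ} {w μ : Fin r → ℝ} (hw : StrictMono w)
    (hpos : ∀ i, 0 < w i) (hμ : StrictMono μ) : 0 < GVd w μ := by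
  set φ : ℝ → ℝ := fun s =>
    Matrix.det (Matrix.of fun i j : Fin r => w i ^ ((1 - s) * μ j + s * (j : ℝ))) with hφ
  have hcont : Continuous φ := by
    apply Continuous.matrix_det
    apply continuous_matrix
    intro i j
    have hrw : (fun s : ℝ => w i ^ ((1 - s) * μ j + s * (j : ℝ)))
        = fun s : ℝ => Real.exp (Real.log (w i) * ((1 - s) * μ j + s * (j : ℝ))) := by
      funext s
      rw [Real.rpow_def_of_pos (hpos i)]
    show Continuous fun s : ℝ => w i ^ ((1 - s) * μ j + s * (j : ℝ))
    rw [hrw]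
    have c1 : Continuous fun s : ℝ => (1 - s) * μ j + s * (j : ℝ) :=
      ((continuous_const.sub continuous_id).mul continuous_const).add
        (continuous_id.mul continuous_const)
    exact Real.continuous_exp.comp (continuous_const.mul c1)
  have hne : ∀ s ∈ Set.Icc (0:ℝ) 1, φ s ≠ 0 := by
    intro s hs
    have hsm : StrictMono fun j : Fin r => (1 - s) * μ j + s * (j : ℝ) := by
      intro a b hab
      show (1 - s) * μ a + s * (a : ℝ) < (1 - s) * μ b + s * (b : ℝ)
      have h1 : (1 - s) * μ a ≤ (1 - s) * μ b :=
        mul_le_mul_of_nonneg_left (hμ hab).le (by linarith [hs.2])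
      have hab' : (a : ℝ) < (b : ℝ) := by exact_mod_cast hab
      have h2 : s * (a : ℝ) ≤ s * (b : ℝ) :=
        mul_le_mul_of_nonneg_left hab'.le hs.1
      rcases lt_or_eq_of_le hs.2 with h | h
      · have : (1 - s) * μ a < (1 - s) * μ b :=
          mul_lt_mul_of_pos_left (hμ hab) (by linarith)
        linarith
      · have : s * (a : ℝ) < s * (b : ℝ) := by
          rw [h]
          simpa using hab'
        linarith
    exact GVd_ne_zero hw.injective hpos hsm.injective
  have hφ1 : 0 < φ 1 := by
    have hmm : (Matrix.of fun i j : Fin r => w i ^ ((1 - (1:ℝ)) * μ j + 1 * (j : ℝ)))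
        = Matrix.vandermonde w := by
      ext i j
      rw [Matrix.vandermonde_apply]
      norm_num [Real.rpow_natCast]
    have : φ 1 = Matrix.det (Matrix.vandermonde w) := by
      show (Matrix.of fun i j : Fin r => w i ^ ((1 - (1:ℝ)) * μ j + 1 * (j : ℝ))).det = _
      rw [hmm]
    rw [this, Matrix.det_vandermonde]
    apply Finset.prod_pos
    intro i _
    apply Finset.prod_pos
    intro j hj
    exact sub_pos.2 (hw (Finset.mem_Ioi.1 hj))
  have hφ0 : φ 0 = GVd w μ := by
    have hmm : (Matrix.of fun i j : Fin r => w i ^ ((1 - (0:ℝ)) * μ j + 0 * (j : ℝ)))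
        = (Matrix.of fun i j : Fin r => w i ^ μ j) := by
      ext i j
      norm_num
    show (Matrix.of fun i j : Fin r => w i ^ ((1 - (0:ℝ)) * μ j + 0 * (j : ℝ))).det = _
    rw [hmm, GVd]
  rw [← hφ0]
  by_contra hle
  push_neg at hle
  have hlt : φ 0 < 0 := lt_of_le_of_ne hle (hne 0 (by norm_num))
  have hIcc : Set.Icc (φ 0) (φ 1) ⊆ φ '' Set.Icc 0 1 :=
    intermediate_value_Icc (by norm_num) hcont.continuousOn
  obtain ⟨s, hs, hφs⟩ := hIcc ⟨hlt.le, hφ1.le⟩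
  exact hne s hs hφs

private noncomputable def Vdm {r : ℕ} (w : Fin r → ℝ) : ℝ :=
  ∏ i : Fin r, ∏ j ∈ Finset.Ioi i, (w j - w i)

open Finset in
private lemma Vdm_pos {r : ℕ} {w : Fin r → ℝ} (hw : StrictMono w) : 0 < Vdm w := by
  rw [Vdm]
  apply Finset.prod_pos
  intro i _
  apply Finset.prod_pos
  intro j hj
  exact sub_pos.2 (hw (Finset.mem_Ioi.1 hj))

private lemma GVd_perm {r : ℕ} (w μ : Fin r → ℝ) (σ : Equiv.Perm (Fin r)) :
    GVd (w ∘ σ) μ = (Equiv.Perm.sign σ : ℝ) * GVd w μ := by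
  have h := Matrix.det_permute σ (Matrix.of fun i j => w i ^ μ j)
  have he : (Matrix.of fun i j => (w ∘ σ) i ^ μ j)
      = (Matrix.of fun i j => w i ^ μ j).submatrix σ id := by
    ext i j; rfl
  rw [GVd, he, h, GVd]

private lemma Vdm_perm {r : ℕ} (w : Fin r → ℝ) (σ : Equiv.Perm (Fin r)) :
    Vdm (w ∘ σ) = (Equiv.Perm.sign σ : ℝ) * Vdm w := by
  have h := Matrix.det_permute σ (Matrix.vandermonde w)
  have he : Matrix.vandermonde (w ∘ σ) = (Matrix.vandermonde w).submatrix σ id := by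
    ext i j; rfl
  have h1 : Vdm (w ∘ σ) = (Matrix.vandermonde (w ∘ σ)).det := (Matrix.det_vandermonde _).symm
  have h2 : Vdm w = (Matrix.vandermonde w).det := (Matrix.det_vandermonde _).symm
  rw [h1, h2, he, h]

private lemma GVd_mul_vdm_pos {r : ℕ} {w μ : Fin r → ℝ} (hw : Function.Injective w)
    (hpos : ∀ i, 0 < w i) (hμ : StrictMono μ) : 0 < GVd w μ * Vdm w := by
  obtain ⟨σ, hσ⟩ := exists_sort_perm hw
  have hA : 0 < GVd (w ∘ σ) μ := GVd_pos hσ (fun i => hpos _) hμ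
  have hB : 0 < Vdm (w ∘ σ) := Vdm_pos hσ
  have h1 := GVd_perm w μ σ
  have h2 := Vdm_perm w σ
  rw [h1] at hA
  rw [h2] at hB
  rcases Int.units_eq_one_or (Equiv.Perm.sign σ) with hs | hs <;>
    rw [hs] at hA hB <;> push_cast at hA hB <;> nlinarith [hA, hB]

private lemma det_update_expand {N' : ℕ} (u : Fin (N'+1) → ℝ) (k : Fin (N'+1))
    (μ : Fin (N'+1) → ℝ) (s : ℝ) :
    GVd (Function.update u k s) μ
      = ∑ j : Fin (N'+1), (-1 : ℝ) ^ ((k:ℕ) + (j:ℕ)) * s ^ μ j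
          * GVd (u ∘ k.succAbove) (μ ∘ j.succAbove) := by
  rw [GVd, Matrix.det_succ_row _ k]
  refine Finset.sum_congr rfl fun j _ => ?_
  have h1 : (Matrix.of fun i j' => Function.update u k s i ^ μ j') k j = s ^ μ j := by
    simp
  have h2 : ((Matrix.of fun i j' => Function.update u k s i ^ μ j').submatrix
        k.succAbove j.succAbove)
      = (Matrix.of fun i j' => (u ∘ k.succAbove) i ^ (μ ∘ j.succAbove) j') := by
    ext a b
    simp [Function.update_of_ne (Fin.succAbove_ne k a)]
  rw [h1, h2, GVd]

private lemma det_snoc_expand {N' : ℕ} (u : Fin (N'+1) → ℝ) (E : Fin (N'+2) → ℝ) (s : ℝ) :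
    GVd (Fin.snoc u s) E = ∑ q : Fin (N'+2),
      (-1 : ℝ) ^ (N' + 1 + (q:ℕ)) * s ^ E q * GVd u (E ∘ q.succAbove) := by
  rw [GVd, Matrix.det_succ_row _ (Fin.last (N'+1))]
  refine Finset.sum_congr rfl fun q _ => ?_
  have h1 : (Matrix.of fun i j' => (Fin.snoc u s : Fin (N'+2) → ℝ) i ^ E j') (Fin.last (N'+1)) q
      = s ^ E q := by
    simp
  have h2 : ((Matrix.of fun i j' => (Fin.snoc u s : Fin (N'+2) → ℝ) i ^ E j').submatrix
        (Fin.last (N'+1)).succAbove q.succAbove)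
      = (Matrix.of fun i j' => u i ^ (E ∘ q.succAbove) j') := by
    ext a b
    simp [Fin.succAbove_last]
  rw [h1, h2, GVd]
  norm_num [Fin.val_last]

private lemma prod_split3 {N : ℕ} (k : Fin N) (g : Fin N → ℝ) :
    ∏ i, g i = (∏ i ∈ Finset.Iio k, g i) * g k * ∏ i ∈ Finset.Ioi k, g i := by
  have h1 : (Finset.univ : Finset (Fin N)) = (Finset.Iio k ∪ {k}) ∪ Finset.Ioi k := by
    ext i
    simp only [Finset.mem_univ, Finset.mem_union, Finset.mem_Iio, Finset.mem_singleton,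
      Finset.mem_Ioi, true_iff]
    rcases lt_trichotomy i k with h | h | h <;> tauto
  have hd1 : Disjoint (Finset.Iio k) ({k} : Finset (Fin N)) := by
    simp [Finset.disjoint_singleton_right]
  have hd2 : Disjoint (Finset.Iio k ∪ {k}) (Finset.Ioi k) := by
    simp only [Finset.disjoint_union_left, Finset.disjoint_singleton_left]
    constructor
    · rw [Finset.disjoint_left]
      intro a ha hb
      simp only [Finset.mem_Iio] at ha
      simp only [Finset.mem_Ioi] at hb
      exact absurd (ha.trans hb) (lt_irrefl _)
    · simp
  rw [h1, Finset.prod_union hd2, Finset.prod_union hd1, Finset.prod_singleton]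

private lemma Ioi_castSucc_prod {N : ℕ} (i : Fin N) (F : Fin (N+1) → ℝ) :
    ∏ q ∈ Finset.Ioi (Fin.castSucc i), F q
      = F (Fin.last N) * ∏ j ∈ Finset.Ioi i, F (Fin.castSucc j) := by
  have hset : Finset.Ioi (Fin.castSucc i)
      = insert (Fin.last N) ((Finset.Ioi i).map Fin.castSuccEmb) := by
    ext q
    simp only [Finset.mem_Ioi, Finset.mem_insert, Finset.mem_map]
    constructor
    · intro hq
      rcases Fin.eq_castSucc_or_eq_last q with ⟨j, rfl⟩ | rfl
      · right
        exact ⟨j, by simpa [Fin.castSucc_lt_castSucc_iff] using hq, rfl⟩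
      · left; rfl
    · rintro (rfl | ⟨j, hj, rfl⟩)
      · exact Fin.castSucc_lt_last i
      · exact Fin.castSucc_lt_castSucc_iff.2 hj
  rw [hset, Finset.prod_insert, Finset.prod_map]
  · rfl
  · simp only [Finset.mem_map]
    rintro ⟨j, _, hj⟩
    exact (Fin.castSucc_lt_last j).ne hj

private lemma vdm_snoc {N : ℕ} (u : Fin (N+1) → ℝ) (t : ℝ) :
    Vdm (Fin.snoc u t : Fin (N+2) → ℝ) = Vdm u * ∏ i, (t - u i) := by
  rw [Vdm, Fin.prod_univ_castSucc]
  have hlast : ∏ q ∈ Finset.Ioi (Fin.last (N+1)),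
      ((Fin.snoc u t : Fin (N+2) → ℝ) q - (Fin.snoc u t : Fin (N+2) → ℝ) (Fin.last (N+1))) = 1 := by
    rw [Finset.prod_eq_one]
    intro q hq
    exact absurd (Finset.mem_Ioi.1 hq) (not_lt.2 (Fin.le_last q))
  rw [hlast, mul_one]
  have hterm : ∀ i : Fin (N+1), ∏ q ∈ Finset.Ioi (Fin.castSucc i),
      ((Fin.snoc u t : Fin (N+2) → ℝ) q - (Fin.snoc u t : Fin (N+2) → ℝ) (Fin.castSucc i))
      = (t - u i) * ∏ j ∈ Finset.Ioi i, (u j - u i) := by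
    intro i
    rw [Ioi_castSucc_prod]
    simp only [Fin.snoc_last, Fin.snoc_castSucc]
  calc ∏ i : Fin (N+1), ∏ q ∈ Finset.Ioi (Fin.castSucc i),
      ((Fin.snoc u t : Fin (N+2) → ℝ) q - (Fin.snoc u t : Fin (N+2) → ℝ) (Fin.castSucc i))
      = ∏ i : Fin (N+1), ((t - u i) * ∏ j ∈ Finset.Ioi i, (u j - u i)) :=
        Finset.prod_congr rfl fun i _ => hterm i
    _ = Vdm u * ∏ i, (t - u i) := by
        rw [Finset.prod_mul_distrib, Vdm]
        ring

private lemma vdm_sign {N : ℕ} {u : Fin (N+1) → ℝ} (hu : StrictMono u) {k : Fin (N+1)} {t : ℝ}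
    (ht : u k < t) (htne : ∀ i, t ≠ u i) :
    ∃ S : ℝ, 0 < S ∧ Vdm (Function.update u k t) * Vdm (Fin.snoc u t : Fin (N+2) → ℝ)
      = (-1 : ℝ)^((Finset.Ioi k).card) * S := by
  set v := Function.update u k t with hv
  -- inner products of Vdm v
  have hvi : ∀ i, i ≠ k → v i = u i := fun i hi => Function.update_of_ne hi _ _
  have hA : 0 < ∏ i ∈ Finset.Iio k, ∏ q ∈ Finset.Ioi i, (v q - v i) := by
    apply Finset.prod_pos
    intro i hi
    have hik : i < k := Finset.mem_Iio.1 hi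
    apply Finset.prod_pos
    intro q hq
    have hiq : i < q := Finset.mem_Ioi.1 hq
    rw [hvi i hik.ne]
    rcases eq_or_ne q k with rfl | hqk
    · rw [hv, Function.update_self]
      exact sub_pos.2 (lt_trans (hu hik) ht)
    · rw [hvi q hqk]
      exact sub_pos.2 (hu hiq)
  have hC : 0 < ∏ i ∈ Finset.Ioi k, ∏ q ∈ Finset.Ioi i, (v q - v i) := by
    apply Finset.prod_pos
    intro i hi
    have hki : k < i := Finset.mem_Ioi.1 hi
    apply Finset.prod_pos
    intro q hq
    have hiq : i < q := Finset.mem_Ioi.1 hq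
    rw [hvi i hki.ne', hvi q (hki.trans hiq).ne']
    exact sub_pos.2 (hu hiq)
  have hBk : ∏ q ∈ Finset.Ioi k, (v q - v k) = ∏ q ∈ Finset.Ioi k, (u q - t) := by
    apply Finset.prod_congr rfl
    intro q hq
    rw [hvi q (Finset.mem_Ioi.1 hq).ne', hv, Function.update_self]
  have hVV : Vdm v = (∏ i ∈ Finset.Iio k, ∏ q ∈ Finset.Ioi i, (v q - v i))
      * (∏ q ∈ Finset.Ioi k, (u q - t))
      * (∏ i ∈ Finset.Ioi k, ∏ q ∈ Finset.Ioi i, (v q - v i)) := by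
    rw [Vdm, prod_split3 k, hBk]
  have hW : Vdm (Fin.snoc u t : Fin (N+2) → ℝ)
      = Vdm u * ((∏ i ∈ Finset.Iio k, (t - u i)) * (t - u k) * ∏ i ∈ Finset.Ioi k, (t - u i)) := by
    rw [vdm_snoc, prod_split3 k]
  have hVu : 0 < Vdm u := by
    rw [Vdm]
    apply Finset.prod_pos; intro i _
    apply Finset.prod_pos; intro j hj
    exact sub_pos.2 (hu (Finset.mem_Ioi.1 hj))
  have hIio : 0 < ∏ i ∈ Finset.Iio k, (t - u i) := by
    apply Finset.prod_pos
    intro i hi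
    exact sub_pos.2 (lt_trans (hu (Finset.mem_Iio.1 hi)) ht)
  have hmix : (∏ q ∈ Finset.Ioi k, (u q - t)) * (∏ q ∈ Finset.Ioi k, (t - u q))
      = (-1 : ℝ)^((Finset.Ioi k).card) * ∏ q ∈ Finset.Ioi k, (t - u q)^2 := by
    rw [← Finset.prod_mul_distrib]
    have : ∀ q ∈ Finset.Ioi k, (u q - t) * (t - u q) = (-1) * (t - u q)^2 := by
      intro q _; ring
    rw [Finset.prod_congr rfl this, Finset.prod_mul_distrib, Finset.prod_const]
  have hsq : 0 < ∏ q ∈ Finset.Ioi k, (t - u q)^2 := by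
    apply Finset.prod_pos
    intro q _
    have h := sub_ne_zero.2 (htne q)
    exact lt_of_le_of_ne (sq_nonneg _) (Ne.symm (pow_ne_zero 2 h))
  refine ⟨(∏ q ∈ Finset.Ioi k, (t - u q)^2)
      * ((∏ i ∈ Finset.Iio k, ∏ q ∈ Finset.Ioi i, (v q - v i))
        * (∏ i ∈ Finset.Ioi k, ∏ q ∈ Finset.Ioi i, (v q - v i))
        * Vdm u * (∏ i ∈ Finset.Iio k, (t - u i)) * (t - u k)), ?_, ?_⟩
  · have htk : 0 < t - u k := sub_pos.2 ht
    exact mul_pos hsq (mul_pos (mul_pos (mul_pos (mul_pos hA hC) hVu) hIio) htk)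
  · rw [hVV, hW]
    linear_combination ((∏ i ∈ Finset.Iio k, ∏ q ∈ Finset.Ioi i, (v q - v i))
        * (∏ i ∈ Finset.Ioi k, ∏ q ∈ Finset.Ioi i, (v q - v i))
        * Vdm u * (∏ i ∈ Finset.Iio k, (t - u i)) * (t - u k)) * hmix

private lemma val_succAbove {N : ℕ} (a : Fin (N+1)) (b : Fin N) :
    ((a.succAbove b : Fin (N+1)) : ℕ) = if (b:ℕ) < (a:ℕ) then (b:ℕ) else (b:ℕ)+1 := by
  rcases lt_or_ge ((b:ℕ)) ((a:ℕ)) with h | h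
  · rw [Fin.succAbove_of_castSucc_lt, if_pos h]
    · rfl
    · simpa [Fin.lt_def] using h
  · rw [Fin.succAbove_of_le_castSucc, if_neg (not_lt.2 h)]
    · rfl
    · simpa [Fin.le_def] using h

private noncomputable def Eexp {N' : ℕ} (m n : Fin (N'+1) → ℝ) (p : Fin (N'+1)) :
    Fin (N'+2) → ℝ :=
  fun q => if h : (q:ℕ) ≤ (p:ℕ) then m ⟨q, lt_of_le_of_lt h p.isLt⟩
    else if h2 : (q:ℕ) = (p:ℕ)+1 then n p
    else m ⟨(q:ℕ)-1, by omega⟩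

private lemma Eexp_val_le {N' : ℕ} (m n : Fin (N'+1) → ℝ) (p : Fin (N'+1)) (q : Fin (N'+2))
    (h : (q:ℕ) ≤ (p:ℕ)) : Eexp m n p q = m ⟨(q:ℕ), lt_of_le_of_lt h p.isLt⟩ := by
  rw [Eexp, dif_pos h]

private lemma Eexp_val_eq {N' : ℕ} (m n : Fin (N'+1) → ℝ) (p : Fin (N'+1)) (q : Fin (N'+2))
    (h : (q:ℕ) = (p:ℕ)+1) : Eexp m n p q = n p := by
  rw [Eexp, dif_neg (by omega), dif_pos h]

private lemma Eexp_val_gt {N' : ℕ} (m n : Fin (N'+1) → ℝ) (p : Fin (N'+1)) (q : Fin (N'+2))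
    (h : (p:ℕ)+1 < (q:ℕ)) : Eexp m n p q = m ⟨(q:ℕ)-1, by omega⟩ := by
  rw [Eexp, dif_neg (by omega), dif_neg (by omega)]

private lemma Eexp_m {N' : ℕ} (m n : Fin (N'+1) → ℝ) (p : Fin (N'+1)) (j : Fin (N'+1)) :
    Eexp m n p ((p.succ).succAbove j) = m j := by
  have hq : (((p.succ).succAbove j):ℕ) = if (j:ℕ) < (p:ℕ)+1 then (j:ℕ) else (j:ℕ)+1 :=
    val_succAbove p.succ j
  rcases lt_or_ge ((j:ℕ)) ((p:ℕ)+1) with h | h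
  · rw [if_pos h] at hq
    rw [Eexp_val_le m n p _ (by omega)]
    congr 1
    exact Fin.ext (by rw [hq])
  · rw [if_neg (not_lt.2 h)] at hq
    rw [Eexp_val_gt m n p _ (by omega)]
    congr 1
    apply Fin.ext
    simp only [Fin.val_mk]
    omega

private lemma Eexp_n {N' : ℕ} (m n : Fin (N'+1) → ℝ) (p : Fin (N'+1))
    (hoff : ∀ j, j ≠ p → m j = n j) (j : Fin (N'+1)) :
    Eexp m n p ((p.castSucc).succAbove j) = n j := by
  have hq : (((p.castSucc).succAbove j):ℕ) = if (j:ℕ) < (p:ℕ) then (j:ℕ) else (j:ℕ)+1 :=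
    val_succAbove p.castSucc j
  rcases lt_or_ge ((j:ℕ)) ((p:ℕ)) with h | h
  · rw [if_pos h] at hq
    rw [Eexp_val_le m n p _ (by omega)]
    rw [← hoff j (by intro he2; rw [he2] at h; omega)]
    congr 1
    apply Fin.ext
    simp only [Fin.val_mk]
    omega
  · rw [if_neg (not_lt.2 h)] at hq
    rcases eq_or_lt_of_le h with he | hlt
    · rw [Eexp_val_eq m n p _ (by omega)]
      have : j = p := Fin.ext (by omega)
      rw [this]
    · rw [Eexp_val_gt m n p _ (by omega)]
      rw [← hoff j (by intro he2; rw [he2] at hlt; omega)]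
      congr 1
      apply Fin.ext
      simp only [Fin.val_mk]
      omega

private lemma Eexp_strictMono {N' : ℕ} {m n : Fin (N'+1) → ℝ} {p : Fin (N'+1)}
    (hm : StrictMono m) (hn : StrictMono n) (hp : m p < n p)
    (hoff : ∀ j, j ≠ p → m j = n j) : StrictMono (Eexp m n p) := by
  rw [Fin.strictMono_iff_lt_succ]
  intro i
  have hci : ((Fin.castSucc i : Fin (N'+2)):ℕ) = (i:ℕ) := rfl
  have hsi : ((Fin.succ i : Fin (N'+2)):ℕ) = (i:ℕ)+1 := rfl
  have hpN : (p:ℕ) < N'+1 := p.isLt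
  have hiN : (i:ℕ) < N'+1 := i.isLt
  rcases lt_trichotomy ((i:ℕ)) ((p:ℕ)) with h | h | h
  · rw [Eexp_val_le m n p _ (by omega), Eexp_val_le m n p _ (by omega)]
    apply hm
    simp only [Fin.lt_def, Fin.val_mk, hci, hsi]
    omega
  · rw [Eexp_val_le m n p _ (by omega), Eexp_val_eq m n p _ (by omega)]
    have he : m (⟨((Fin.castSucc i : Fin (N'+2)):ℕ), by omega⟩ : Fin (N'+1)) = m p := by
      congr 1
      apply Fin.ext
      simp only [Fin.val_mk, hci]
      omega
    rw [he]
    exact hp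
  · by_cases hip : (i:ℕ) = (p:ℕ)+1
    · rw [Eexp_val_eq m n p _ (by rw [hci, hip]), Eexp_val_gt m n p _ (by omega)]
      have he : m (⟨((Fin.succ i : Fin (N'+2)):ℕ)-1, by omega⟩ : Fin (N'+1))
          = n (⟨(p:ℕ)+1, by omega⟩ : Fin (N'+1)) := by
        rw [show (⟨((Fin.succ i : Fin (N'+2)):ℕ)-1, by omega⟩ : Fin (N'+1))
            = (⟨(p:ℕ)+1, by omega⟩ : Fin (N'+1)) from Fin.ext (by simp only [Fin.val_mk, hsi]; omega)]
        exact hoff _ (by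
          intro he3
          have := congrArg Fin.val he3
          simp only [Fin.val_mk] at this
          omega)
      rw [he]
      apply hn
      simp only [Fin.lt_def, Fin.val_mk]
      omega
    · rw [Eexp_val_gt m n p _ (by omega), Eexp_val_gt m n p _ (by omega)]
      apply hm
      simp only [Fin.lt_def, Fin.val_mk, hci, hsi]
      omega

private lemma step_lemma {N' : ℕ} {u : Fin (N'+1) → ℝ} (hu : StrictMono u)
    (hupos : ∀ i, 0 < u i) {k : Fin (N'+1)} {t : ℝ} (ht : u k < t)
    (hvinj : Function.Injective (Function.update u k t))
    {m n : Fin (N'+1) → ℝ} (hm : StrictMono m) (hn : StrictMono n)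
    {p : Fin (N'+1)} (hp : m p < n p) (hoff : ∀ j, j ≠ p → m j = n j) :
    GVd u n / GVd u m < GVd (Function.update u k t) n / GVd (Function.update u k t) m := by
  have huinj := hu.injective
  set v := Function.update u k t with hvdef
  have hvk : v k = t := Function.update_self k t u
  have hvne : ∀ i, i ≠ k → v i = u i := fun i hi => Function.update_of_ne hi _ _
  have hvpos : ∀ i, 0 < v i := by
    intro i
    rcases eq_or_ne i k with rfl | h
    · rw [hvk]; exact lt_trans (hupos i) ht
    · rw [hvne i h]; exact hupos i
  have htne : ∀ i, t ≠ u i := by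
    intro i
    rcases eq_or_ne i k with rfl | h
    · exact ht.ne'
    · intro he
      exact h.symm (hvinj (by rw [hvk, hvne i h, he]))
  -- exponents
  set E := Eexp m n p with hEdef
  have hE : StrictMono E := Eexp_strictMono hm hn hp hoff
  have hEm : ∀ j, E ((p.succ).succAbove j) = m j := Eexp_m m n p
  have hEn : ∀ j, E ((p.castSucc).succAbove j) = n j := Eexp_n m n p hoff
  -- determinants of u
  have hDm : 0 < GVd u m := GVd_pos hu hupos hm
  have hDn : 0 < GVd u n := GVd_pos hu hupos hn
  have hAn : 0 < GVd (u ∘ k.succAbove) (n ∘ p.succAbove) :=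
    GVd_pos (hu.comp (Fin.strictMono_succAbove k)) (fun i => hupos _)
      (hn.comp (Fin.strictMono_succAbove p))
  set lam := GVd u n / GVd u m with hlam
  -- coefficient vectors
  set am : Fin (N'+1) → ℝ :=
    fun j => (-1:ℝ)^((k:ℕ)+(j:ℕ)) * GVd (u ∘ k.succAbove) (m ∘ j.succAbove) with ham
  set an : Fin (N'+1) → ℝ :=
    fun j => (-1:ℝ)^((k:ℕ)+(j:ℕ)) * GVd (u ∘ k.succAbove) (n ∘ j.succAbove) with han
  set dm : Fin (N'+2) → ℝ := Fin.insertNth p.succ 0 am with hdm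
  set dn : Fin (N'+2) → ℝ := Fin.insertNth p.castSucc 0 an with hdn
  have hm_ev : ∀ s : ℝ, GVd (Function.update u k s) m = ∑ q, dm q * s ^ E q := by
    intro s
    rw [det_update_expand u k m s,
      Fin.sum_univ_succAbove (fun q => dm q * s ^ E q) p.succ]
    rw [hdm]
    rw [Fin.insertNth_apply_same, zero_mul, zero_add]
    refine Finset.sum_congr rfl fun j _ => ?_
    rw [Fin.insertNth_apply_succAbove, hEm j]
    ring
  have hn_ev : ∀ s : ℝ, GVd (Function.update u k s) n = ∑ q, dn q * s ^ E q := by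
    intro s
    rw [det_update_expand u k n s,
      Fin.sum_univ_succAbove (fun q => dn q * s ^ E q) p.castSucc]
    rw [hdn]
    rw [Fin.insertNth_apply_same, zero_mul, zero_add]
    refine Finset.sum_congr rfl fun j _ => ?_
    rw [Fin.insertNth_apply_succAbove, hEn j]
    ring
  set cg : Fin (N'+2) → ℝ := fun q => dn q - lam * dm q with hcg
  have hg_ev : ∀ s : ℝ, GVd (Function.update u k s) n - lam * GVd (Function.update u k s) m
      = ∑ q, cg q * s ^ E q := by
    intro s
    rw [hm_ev s, hn_ev s, Finset.mul_sum, ← Finset.sum_sub_distrib]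
    exact Finset.sum_congr rfl fun q _ => by rw [hcg]; ring
  set cD : Fin (N'+2) → ℝ := fun q => (-1:ℝ)^(N'+1+(q:ℕ)) * GVd u (E ∘ q.succAbove) with hcD
  have hD_ev : ∀ s : ℝ, GVd (Fin.snoc u s : Fin (N'+2) → ℝ) E = ∑ q, cD q * s ^ E q := by
    intro s
    rw [det_snoc_expand u E s]
    exact Finset.sum_congr rfl fun q _ => by rw [hcD]; ring
  -- roots
  have hdetrow : ∀ (i : Fin (N'+1)), i ≠ k → ∀ μ : Fin (N'+1) → ℝ,
      GVd (Function.update u k (u i)) μ = 0 := by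
    intro i hik μ
    rw [GVd]
    apply Matrix.det_zero_of_row_eq hik
    funext j'
    simp only [Matrix.of_apply, Function.update_of_ne hik, Function.update_self]
  have hgroot : ∀ i : Fin (N'+1), ∑ q, cg q * (u i) ^ E q = 0 := by
    intro i
    rw [← hg_ev (u i)]
    rcases eq_or_ne i k with rfl | h
    · rw [Function.update_eq_self, hlam, div_mul_cancel₀ _ hDm.ne', sub_self]
    · rw [hdetrow i h m, hdetrow i h n, mul_zero, sub_zero]
  have hDroot : ∀ i : Fin (N'+1), ∑ q, cD q * (u i) ^ E q = 0 := by
    intro i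
    rw [← hD_ev (u i), GVd]
    apply Matrix.det_zero_of_row_eq (Fin.castSucc_lt_last i).ne
    funext j'
    simp only [Matrix.of_apply, Fin.snoc_castSucc, Fin.snoc_last]
  -- pivot coefficients
  have hsucc_eq : (p.castSucc).succAbove p = p.succ := by
    apply Fin.ext
    rw [val_succAbove]
    simp
  have hcgp : cg p.succ = (-1:ℝ)^((k:ℕ)+(p:ℕ)) * GVd (u ∘ k.succAbove) (n ∘ p.succAbove) := by
    rw [hcg]
    dsimp only
    rw [hdm, hdn, Fin.insertNth_apply_same, mul_zero, sub_zero, ← hsucc_eq,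
      Fin.insertNth_apply_succAbove, han]
  have hcDp : cD p.succ = (-1:ℝ)^(N'+1+((p:ℕ)+1)) * GVd u m := by
    have hEc : E ∘ (p.succ).succAbove = m := funext hEm
    rw [hcD]
    dsimp only
    rw [hEc, Fin.val_succ]
  have hcDp_ne : cD p.succ ≠ 0 := by
    rw [hcDp]
    exact mul_ne_zero (pow_ne_zero _ (by norm_num)) hDm.ne'
  set gam := cg p.succ / cD p.succ with hgam
  -- proportionality
  have hprop : ∀ q, cg q = gam * cD q := by
    have hdroot : ∀ i : Fin (N'+1), ∑ q, (cg q - gam * cD q) * (u i) ^ E q = 0 := by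
      intro i
      have : ∑ q, (cg q - gam * cD q) * (u i) ^ E q
          = (∑ q, cg q * (u i) ^ E q) - gam * ∑ q, cD q * (u i) ^ E q := by
        rw [Finset.mul_sum, ← Finset.sum_sub_distrib]
        exact Finset.sum_congr rfl fun q _ => by ring
      rw [this, hgroot i, hDroot i, mul_zero, sub_zero]
    have hdp : cg p.succ - gam * cD p.succ = 0 := by
      rw [hgam, div_mul_cancel₀ _ hcDp_ne, sub_self]
    have hrest : ∀ j : Fin (N'+1), cg ((p.succ).succAbove j) - gam * cD ((p.succ).succAbove j) = 0 := by
      by_contra hcon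
      push_neg at hcon
      have hdet0 : GVd u m = 0 := by
        rw [GVd]
        apply (Matrix.exists_mulVec_eq_zero_iff).1
        refine ⟨fun j => cg ((p.succ).succAbove j) - gam * cD ((p.succ).succAbove j), ?_, ?_⟩
        · intro h0
          obtain ⟨j, hj⟩ := hcon
          exact hj (congrFun h0 j)
        · funext i
          have h1 := hdroot i
          rw [Fin.sum_univ_succAbove (fun q => (cg q - gam * cD q) * (u i) ^ E q) p.succ,
            hdp, zero_mul, zero_add] at h1
          have h2 : ∑ j, (cg ((p.succ).succAbove j) - gam * cD ((p.succ).succAbove j))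
              * (u i) ^ m j = 0 := by
            rw [← h1]
            exact Finset.sum_congr rfl fun j _ => by rw [hEm j]
          simp only [Matrix.mulVec, dotProduct, Matrix.of_apply, Pi.zero_apply]
          rw [← h2]
          exact Finset.sum_congr rfl fun j _ => by ring
      exact hDm.ne' hdet0
    intro q
    rcases eq_or_ne q p.succ with rfl | hq
    · have := hdp; linarith
    · obtain ⟨j, rfl⟩ := Fin.exists_succAbove_eq hq
      have := hrest j; linarith
  -- key identity at t
  have hkey : GVd v n - lam * GVd v m = gam * GVd (Fin.snoc u t : Fin (N'+2) → ℝ) E := by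
    rw [hvdef, hg_ev t, hD_ev t, Finset.mul_sum]
    exact Finset.sum_congr rfl fun q _ => by rw [hprop q]; ring
  -- sign data
  have hwinj : Function.Injective (Fin.snoc u t : Fin (N'+2) → ℝ) := by
    intro a b hab
    rcases Fin.eq_castSucc_or_eq_last a with ⟨a', rfl⟩ | rfl <;>
      rcases Fin.eq_castSucc_or_eq_last b with ⟨b', rfl⟩ | rfl
    · rw [Fin.snoc_castSucc, Fin.snoc_castSucc] at hab
      rw [huinj hab]
    · rw [Fin.snoc_castSucc, Fin.snoc_last] at hab
      exact absurd hab.symm (htne a')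
    · rw [Fin.snoc_last, Fin.snoc_castSucc] at hab
      exact absurd hab (htne b')
    · rfl
  have hwpos : ∀ q, 0 < (Fin.snoc u t : Fin (N'+2) → ℝ) q := by
    intro q
    rcases Fin.eq_castSucc_or_eq_last q with ⟨q', rfl⟩ | rfl
    · rw [Fin.snoc_castSucc]; exact hupos q'
    · rw [Fin.snoc_last]; exact lt_trans (hupos k) ht
  have hX : 0 < GVd (Fin.snoc u t : Fin (N'+2) → ℝ) E * Vdm (Fin.snoc u t : Fin (N'+2) → ℝ) :=
    GVd_mul_vdm_pos hwinj hwpos hE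
  have hY : 0 < GVd v m * Vdm v := GVd_mul_vdm_pos hvinj hvpos hm
  obtain ⟨S, hS, hvw⟩ := vdm_sign hu ht htne
  have hvmne : GVd v m ≠ 0 := by
    intro h0
    rw [hvdef] at h0
    rw [h0, zero_mul] at hY
    exact lt_irrefl 0 hY
  -- main positivity
  have hc : (Finset.Ioi k).card = N' - (k:ℕ) := by
    rw [Fin.card_Ioi]
    omega
  have hkN : (k:ℕ) < N'+1 := k.isLt
  set c := (Finset.Ioi k).card with hcdef
  set a1 := (k:ℕ)+(p:ℕ) with ha1
  set a2 := N'+1+((p:ℕ)+1) with ha2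
  have e1 : gam * ((-1:ℝ)^a2 * GVd u m) = (-1:ℝ)^a1 * GVd (u ∘ k.succAbove) (n ∘ p.succAbove) := by
    rw [hgam, hcgp, hcDp, div_mul_cancel₀]
    rw [← hcDp]
    exact hcDp_ne
  have e2 : (GVd (Fin.snoc u t : Fin (N'+2) → ℝ) E * GVd v m) * ((-1:ℝ)^c * S)
      = (GVd (Fin.snoc u t : Fin (N'+2) → ℝ) E * Vdm (Fin.snoc u t : Fin (N'+2) → ℝ))
        * (GVd v m * Vdm v) := by
    rw [← hvw, hvdef]
    ring
  set T := gam * GVd (Fin.snoc u t : Fin (N'+2) → ℝ) E * GVd v m with hT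
  have e3 : T * (((-1:ℝ)^a2 * GVd u m) * ((-1:ℝ)^c * S))
      = ((-1:ℝ)^a1 * GVd (u ∘ k.succAbove) (n ∘ p.succAbove))
        * ((GVd (Fin.snoc u t : Fin (N'+2) → ℝ) E * Vdm (Fin.snoc u t : Fin (N'+2) → ℝ))
          * (GVd v m * Vdm v)) := by
    rw [← e1, ← e2, hT]
    ring
  have heven : (-1:ℝ)^a1 * ((-1:ℝ)^a2 * (-1:ℝ)^c) = 1 := by
    rw [← pow_add, ← pow_add]
    have hsum : a1 + (a2 + c) = 2*((p:ℕ) + N'+1) := by omega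
    rw [hsum, pow_mul]
    norm_num
  have hTpos : 0 < T := by
    have hQ : 0 < GVd (u ∘ k.succAbove) (n ∘ p.succAbove)
        * ((GVd (Fin.snoc u t : Fin (N'+2) → ℝ) E * Vdm (Fin.snoc u t : Fin (N'+2) → ℝ))
          * (GVd v m * Vdm v)) := mul_pos hAn (mul_pos hX hY)
    have hP : 0 < GVd u m * S := mul_pos hDm hS
    -- T * ((-1)^(a2+c) * (GVd u m * S)) = (-1)^a1 * Q
    -- multiply e3 by (-1)^a1:
    have hpow : (-1:ℝ)^a1 * (-1:ℝ)^a1 = 1 := by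
      rw [← pow_add]
      have h2a : a1 + a1 = 2*a1 := by omega
      rw [h2a, pow_mul]
      norm_num
    have e4 : T * (GVd u m * S) = GVd (u ∘ k.succAbove) (n ∘ p.succAbove)
          * ((GVd (Fin.snoc u t : Fin (N'+2) → ℝ) E * Vdm (Fin.snoc u t : Fin (N'+2) → ℝ))
            * (GVd v m * Vdm v)) := by
      have h5 : T * (GVd u m * S) * ((-1:ℝ)^a1 * ((-1:ℝ)^a2 * (-1:ℝ)^c))
          = ((-1:ℝ)^a1 * (-1:ℝ)^a1) * (GVd (u ∘ k.succAbove) (n ∘ p.succAbove)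
            * ((GVd (Fin.snoc u t : Fin (N'+2) → ℝ) E * Vdm (Fin.snoc u t : Fin (N'+2) → ℝ))
              * (GVd v m * Vdm v))) := by
        calc T * (GVd u m * S) * ((-1:ℝ)^a1 * ((-1:ℝ)^a2 * (-1:ℝ)^c))
            = (-1:ℝ)^a1 * (T * ((-1:ℝ)^a2 * GVd u m * ((-1:ℝ)^c * S))) := by ring
          _ = ((-1:ℝ)^a1 * (-1:ℝ)^a1) * (GVd (u ∘ k.succAbove) (n ∘ p.succAbove)
              * ((GVd (Fin.snoc u t : Fin (N'+2) → ℝ) E * Vdm (Fin.snoc u t : Fin (N'+2) → ℝ))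
                * (GVd v m * Vdm v))) := by rw [e3]; ring
      rw [heven, mul_one, hpow, one_mul] at h5
      exact h5
    have : T = (GVd (u ∘ k.succAbove) (n ∘ p.succAbove)
        * ((GVd (Fin.snoc u t : Fin (N'+2) → ℝ) E * Vdm (Fin.snoc u t : Fin (N'+2) → ℝ))
          * (GVd v m * Vdm v))) / (GVd u m * S) := by
      rw [eq_div_iff hP.ne']
      exact e4
    rw [this]
    exact div_pos hQ hP
  -- conclude
  have hfin : GVd v n / GVd v m - lam = T / (GVd v m)^2 := by
    rw [hT]
    field_simp
    nlinarith [hkey]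
  have hsq : 0 < T / (GVd v m)^2 := by
    apply div_pos hTpos
    exact lt_of_le_of_ne (sq_nonneg _) (Ne.symm (pow_ne_zero 2 hvmne))
  rw [← hfin] at hsq
  rw [hlam] at hsq
  linarith

private lemma chain_helper (M : ℕ) (au av : ℕ → ℝ)
    (hau : ∀ i, i ≤ M → 0 < au i) (hav : ∀ i, i ≤ M → 0 < av i)
    (hstep : ∀ i, i < M → au (i+1) * av i ≤ av (i+1) * au i)
    (i0 : ℕ) (hi0 : i0 < M) (hstrict : au (i0+1) * av i0 < av (i0+1) * au i0) :
    au M * av 0 < av M * au 0 := by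
  have hau0 : 0 < au 0 := hau 0 (Nat.zero_le M)
  have hav0 : 0 < av 0 := hav 0 (Nat.zero_le M)
  have lemA : ∀ b, b ≤ M → au b * av 0 ≤ av b * au 0 := by
    intro b
    induction b with
    | zero => intro _; rw [mul_comm]
    | succ b ih =>
      intro hb
      have hbM : b < M := hb
      have h1 := hstep b hbM
      have h2 := ih (le_of_lt hbM)
      have hp1 : 0 < au b := hau b (le_of_lt hbM)
      have hp2 : 0 < av b := hav b (le_of_lt hbM)
      have hp3 : 0 < au (b+1) := hau _ hb
      have hp4 : 0 < av (b+1) := hav _ hb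
      have h3 := mul_le_mul h1 h2 (by positivity) (by positivity)
      nlinarith [h3, mul_pos hp1 hp2]
  have lemB : ∀ b, i0+1 ≤ b → b ≤ M → au b * av 0 < av b * au 0 := by
    intro b hb1 hbM
    induction b, hb1 using Nat.le_induction with
    | base =>
      have h2 := lemA i0 (le_of_lt hi0)
      have hp1 : 0 < au i0 := hau i0 (le_of_lt hi0)
      have hp2 : 0 < av i0 := hav i0 (le_of_lt hi0)
      have hp3 : 0 < au (i0+1) := hau _ hi0
      have hp4 : 0 < av (i0+1) := hav _ hi0
      have h3 : au (i0+1) * av i0 * (au i0 * av 0) < av (i0+1) * au i0 * (av i0 * au 0) := by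
        have ha : au (i0+1) * av i0 * (au i0 * av 0) ≤ au (i0+1) * av i0 * (av i0 * au 0) :=
          mul_le_mul_of_nonneg_left h2 (by positivity)
        have hbb : au (i0+1) * av i0 * (av i0 * au 0) < av (i0+1) * au i0 * (av i0 * au 0) :=
          mul_lt_mul_of_pos_right hstrict (by positivity)
        exact lt_of_le_of_lt ha hbb
      nlinarith [h3, mul_pos hp1 hp2]
    | succ b hb ih =>
      have hbM' : b < M := by omega
      have h1 := hstep b hbM'
      have h2 := ih (le_of_lt hbM')
      have hp1 : 0 < au b := hau b (le_of_lt hbM')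
      have hp2 : 0 < av b := hav b (le_of_lt hbM')
      have hp3 : 0 < au (b+1) := hau _ hbM'
      have hp4 : 0 < av (b+1) := hav _ hbM'
      have h3 : au (b+1) * av b * (au b * av 0) < av (b+1) * au b * (av b * au 0) := by
        have ha : au (b+1) * av b * (au b * av 0) < au (b+1) * av b * (av b * au 0) :=
          mul_lt_mul_of_pos_left h2 (by positivity)
        have hbb : au (b+1) * av b * (av b * au 0) ≤ av (b+1) * au b * (av b * au 0) :=
          mul_le_mul_of_nonneg_right h1 (by positivity)
        exact lt_of_lt_of_le ha hbb
      nlinarith [h3, mul_pos hp1 hp2]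
  exact lemB M hi0 le_rfl

private lemma chain_lemma {N' : ℕ} {u : Fin (N'+1) → ℝ} (hu : StrictMono u)
    (hupos : ∀ i, 0 < u i) {k : Fin (N'+1)} {t : ℝ} (ht : u k < t)
    (hvinj : Function.Injective (Function.update u k t))
    {m n : Fin (N'+1) → ℝ} (hm : StrictMono m) (hn : StrictMono n)
    (hle : ∀ j, m j ≤ n j) (hmn : m ≠ n) :
    GVd u n / GVd u m < GVd (Function.update u k t) n / GVd (Function.update u k t) m := by
  set v := Function.update u k t with hvdef
  have hvpos : ∀ i, 0 < v i := by
    intro i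
    rcases eq_or_ne i k with rfl | h
    · rw [hvdef, Function.update_self]; exact lt_trans (hupos i) ht
    · rw [hvdef, Function.update_of_ne h]; exact hupos i
  set μ : ℕ → Fin (N'+1) → ℝ := fun i j => if N'+1 ≤ (j:ℕ) + i then n j else m j with hμ
  have hμ0 : μ 0 = m := by
    funext j
    rw [hμ]
    exact if_neg (by have := j.isLt; omega)
  have hμM : μ (N'+1) = n := by
    funext j
    rw [hμ]
    exact if_pos (by omega)
  have hμmono : ∀ i, StrictMono (μ i) := by
    intro i a b hab
    have hab' : (a:ℕ) < (b:ℕ) := hab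
    show (if N'+1 ≤ (a:ℕ) + i then n a else m a) < (if N'+1 ≤ (b:ℕ) + i then n b else m b)
    by_cases hca : N'+1 ≤ (a:ℕ)+i
    · rw [if_pos hca, if_pos (by omega)]
      exact hn hab
    · rw [if_neg hca]
      by_cases hcb : N'+1 ≤ (b:ℕ)+i
      · rw [if_pos hcb]
        exact lt_of_lt_of_le (hm hab) (hle b)
      · rw [if_neg hcb]
        exact hm hab
  have hVv : Vdm v ≠ 0 := by
    intro h0
    have := GVd_mul_vdm_pos hvinj hvpos hm
    rw [h0, mul_zero] at this
    exact lt_irrefl 0 this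
  set au : ℕ → ℝ := fun i => GVd u (μ i) with hau
  set av : ℕ → ℝ := fun i => GVd v (μ i) * Vdm v with hav
  have haupos : ∀ i, i ≤ N'+1 → 0 < au i := fun i _ => GVd_pos hu hupos (hμmono i)
  have havpos : ∀ i, i ≤ N'+1 → 0 < av i :=
    fun i _ => GVd_mul_vdm_pos hvinj hvpos (hμmono i)
  -- the distinguished coordinate of step i
  have hpdef : ∀ i : ℕ, (N'-i) < N'+1 := fun i => by omega
  have hμip : ∀ i, i < N'+1 → μ i ⟨N'-i, hpdef i⟩ = m ⟨N'-i, hpdef i⟩ := by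
    intro i hi
    rw [hμ]
    exact if_neg (by simp only [Fin.val_mk]; omega)
  have hμi1p : ∀ i, i < N'+1 → μ (i+1) ⟨N'-i, hpdef i⟩ = n ⟨N'-i, hpdef i⟩ := by
    intro i hi
    rw [hμ]
    exact if_pos (by simp only [Fin.val_mk]; omega)
  have hμoff : ∀ i, i < N'+1 → ∀ j, j ≠ (⟨N'-i, hpdef i⟩ : Fin (N'+1)) → μ i j = μ (i+1) j := by
    intro i hi j hj
    have hjv : (j:ℕ) ≠ N'-i := by
      intro he
      exact hj (Fin.ext he)
    rw [hμ]
    simp only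
    by_cases h1 : N'+1 ≤ (j:ℕ)+i
    · rw [if_pos h1, if_pos (by omega)]
    · rw [if_neg h1, if_neg (by have := j.isLt; omega)]
  have hstepcase : ∀ i, i < N'+1 →
      (au (i+1) * av i ≤ av (i+1) * au i) ∧
      (m (⟨N'-i, hpdef i⟩ : Fin (N'+1)) ≠ n (⟨N'-i, hpdef i⟩ : Fin (N'+1)) →
        au (i+1) * av i < av (i+1) * au i) := by
    intro i hi
    by_cases heq : m (⟨N'-i, hpdef i⟩ : Fin (N'+1)) = n (⟨N'-i, hpdef i⟩ : Fin (N'+1))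
    · have hμeq : μ (i+1) = μ i := by
        funext j
        rcases eq_or_ne j (⟨N'-i, hpdef i⟩ : Fin (N'+1)) with rfl | hj
        · rw [hμip i hi, hμi1p i hi, heq]
        · exact (hμoff i hi j hj).symm
      constructor
      · rw [hau, hav]
        dsimp only
        rw [hμeq]
        exact le_of_eq (by ring)
      · intro hne
        exact absurd heq hne
    · have hplt : m (⟨N'-i, hpdef i⟩ : Fin (N'+1)) < n (⟨N'-i, hpdef i⟩ : Fin (N'+1)) :=
        lt_of_le_of_ne (hle _) heq
      have hsl := step_lemma hu hupos ht hvinj (hμmono i) (hμmono (i+1))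
        (p := ⟨N'-i, hpdef i⟩)
        (by rw [hμip i hi, hμi1p i hi]; exact hplt)
        (fun j hj => hμoff i hi j hj)
      -- hsl : GVd u (μ (i+1)) / GVd u (μ i) < GVd v (μ (i+1)) / GVd v (μ i)
      have hrw : GVd v (μ (i+1)) / GVd v (μ i) = av (i+1) / av i := by
        rw [hav]
        dsimp only
        rw [mul_div_mul_right _ _ hVv]
      rw [hrw] at hsl
      have hcross : au (i+1) * av i < av (i+1) * au i := by
        have h1 : 0 < au i := haupos i (by omega)
        have h2 : 0 < av i := havpos i (by omega)
        have := (div_lt_div_iff₀ h1 h2).1 (by rw [hau]; dsimp only; exact hsl)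
        exact this
      exact ⟨le_of_lt hcross, fun _ => hcross⟩
  -- strict index
  have hex : ∃ j0 : Fin (N'+1), m j0 ≠ n j0 := by
    by_contra hcon
    push_neg at hcon
    exact hmn (funext hcon)
  obtain ⟨j0, hj0⟩ := hex
  have hi0 : N'-(j0:ℕ) < N'+1 := by omega
  have hpi0 : (⟨N'-(N'-(j0:ℕ)), hpdef _⟩ : Fin (N'+1)) = j0 := by
    apply Fin.ext
    simp only [Fin.val_mk]
    have := j0.isLt
    omega
  have hmain := chain_helper (N'+1) au av haupos havpos
    (fun i hi => (hstepcase i hi).1) (N'-(j0:ℕ)) hi0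
    ((hstepcase _ hi0).2 (by rw [hpi0]; exact hj0))
  -- unfold
  rw [hau, hav] at hmain
  dsimp only at hmain
  rw [hμ0, hμM] at hmain
  have h1 : 0 < GVd u m := GVd_pos hu hupos hm
  have h2 : 0 < GVd v m * Vdm v := GVd_mul_vdm_pos hvinj hvpos hm
  have hrw2 : GVd v n / GVd v m = (GVd v n * Vdm v) / (GVd v m * Vdm v) :=
    (mul_div_mul_right _ _ hVv).symm
  rw [hrw2, div_lt_div_iff₀ h1 h2]
  calc GVd u n * (GVd v m * Vdm v) < GVd v n * Vdm v * GVd u m := hmain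
    _ = GVd v n * Vdm v * GVd u m := rfl

theorem stmt10 (N : ℕ) (hN : 1 ≤ N) (m n : Fin N → ℝ)
    (hm : StrictMono m) (hn : StrictMono n) (hmn : m ≠ n) (hle : ∀ j, m j ≤ n j)
    (u : Fin N → ℝ) (hu : ∀ i, 0 < u i) (huinj : Function.Injective u)
    (k : Fin N) (t : ℝ) (ht : u k < t)
    (hvinj : Function.Injective (Function.update u k t)) :
    Matrix.det (Matrix.of fun i j => u i ^ m j) ≠ 0 ∧
    Matrix.det (Matrix.of fun i j => Function.update u k t i ^ m j) ≠ 0 ∧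
    Matrix.det (Matrix.of fun i j => u i ^ n j) /
        Matrix.det (Matrix.of fun i j => u i ^ m j) <
      Matrix.det (Matrix.of fun i j => Function.update u k t i ^ n j) /
        Matrix.det (Matrix.of fun i j => Function.update u k t i ^ m j) := by
  rcases N with _ | N'
  · omega
  have hvpos : ∀ i, 0 < Function.update u k t i := by
    intro i
    rcases eq_or_ne i k with rfl | h
    · rw [Function.update_self]; exact lt_trans (hu i) ht
    · rw [Function.update_of_ne h]; exact hu i
  refine ⟨GVd_ne_zero huinj hu hm.injective, GVd_ne_zero hvinj hvpos hm.injective, ?_⟩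
  obtain ⟨σ, hσ⟩ := exists_sort_perm huinj
  have hk' : (u ∘ σ) (σ.symm k) = u k := by
    simp only [Function.comp_apply, Equiv.apply_symm_apply]
  have hv' : Function.update (u ∘ σ) (σ.symm k) t = (Function.update u k t) ∘ σ := by
    funext i
    rcases eq_or_ne i (σ.symm k) with rfl | h
    · show _ = Function.update u k t (σ (σ.symm k))
      rw [Equiv.apply_symm_apply, Function.update_self, Function.update_self]
    · rw [Function.update_of_ne h]
      have hσi : σ i ≠ k := by
        intro he
        exact h (by rw [← he, Equiv.symm_apply_apply])
      simp only [Function.comp_apply, Function.update_of_ne hσi]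
  have hvinj' : Function.Injective (Function.update (u ∘ σ) (σ.symm k) t) := by
    rw [hv']
    exact hvinj.comp σ.injective
  have hchain := chain_lemma hσ (fun i => hu _) (k := σ.symm k) (t := t)
    (by rw [hk']; exact ht) hvinj' hm hn hle hmn
  rw [hv'] at hchain
  rw [GVd_perm u n σ, GVd_perm u m σ, GVd_perm (Function.update u k t) n σ,
    GVd_perm (Function.update u k t) m σ] at hchain
  show GVd u n / GVd u m
      < GVd (Function.update u k t) n / GVd (Function.update u k t) m
  rcases Int.units_eq_one_or (Equiv.Perm.sign σ) with hs | hs <;> rw [hs] at hchain <;>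
    push_cast at hchain
  · simpa using hchain
  · rw [show ((-1:ℝ)) * GVd u n = -(GVd u n) by ring,
      show ((-1:ℝ)) * GVd u m = -(GVd u m) by ring,
      show ((-1:ℝ)) * GVd (Function.update u k t) n = -(GVd (Function.update u k t) n) by ring,
      show ((-1:ℝ)) * GVd (Function.update u k t) m = -(GVd (Function.update u k t) m) by ring,
      neg_div_neg_eq, neg_div_neg_eq] at hchain
    exact hchain
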